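/- Under the varying-coefficient model E[Y(t) | X(t), Z(t)] = X(t)ᵀβ(t) + Z(t)ᵀγ(t) with E[Z(t) | X(t)] = E[Z(t)], the centered variables satisfy E[Ỹ(t) | X̃(t)] = X̃(t)ᵀ β(t), where Ỹ(t) = Y(t) - E[Y(t)] and X̃(t) = X(t) - E[X(t)]. -/

import Mathlib

open MeasureTheory

/-- Under the varying-coefficient model `E[Y | X, Z] = Xᵀβ + Zᵀγ` with
`E[Z | X] = E[Z]`, the centered variables satisfy
`E[Ỹ | X̃] = X̃ᵀ β`, where `Ỹ = Y - E Y` and `X̃ = X - E X`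
(note `σ(X̃) = σ(X)`). -/
theorem condexp_centered_of_orthogonality
    {Ω : Type*} [m0 : MeasurableSpace Ω] (μ : Measure Ω) [IsProbabilityMeasure μ]
    {p q : ℕ}
    (X : Ω → (Fin p → ℝ)) (Z : Ω → (Fin q → ℝ)) (Y : Ω → ℝ)
    (β : Fin p → ℝ) (γ : Fin q → ℝ)
    (hX : Measurable X) (hZ : Measurable Z)
    (hY : Integrable Y μ)
    (hXint : ∀ i, Integrable (fun ω => X ω i) μ)
    (hZint : ∀ j, Integrable (fun ω => Z ω j) μ)
    (hmodel :
      μ[Y | MeasurableSpace.comap (fun ω => (X ω, Z ω)) inferInstance] =ᵐ[μ]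
        fun ω => (∑ i, X ω i * β i) + ∑ j, Z ω j * γ j)
    (horth : ∀ j,
      μ[(fun ω => Z ω j) | MeasurableSpace.comap X inferInstance] =ᵐ[μ]
        fun _ => ∫ ω, Z ω j ∂μ) :
    μ[(fun ω => Y ω - ∫ ω', Y ω' ∂μ) | MeasurableSpace.comap X inferInstance]
      =ᵐ[μ] fun ω => ∑ i, (X ω i - ∫ ω', X ω' i ∂μ) * β i := by
  set mX := MeasurableSpace.comap X inferInstance with hmXdef
  set mXZ := MeasurableSpace.comap (fun ω => (X ω, Z ω)) inferInstance with hmXZdef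
  have hmX : mX ≤ m0 := hX.comap_le
  have hmXZ : mXZ ≤ m0 := (hX.prodMk hZ).comap_le
  have hle : mX ≤ mXZ := by
    rw [hmXdef, hmXZdef]
    have hXeq : X = Prod.fst ∘ (fun ω => (X ω, Z ω)) := rfl
    rw [hXeq, ← MeasurableSpace.comap_comp]
    exact MeasurableSpace.comap_mono measurable_fst.comap_le
  have hXb : Integrable (fun ω => ∑ i, X ω i * β i) μ :=
    integrable_finset_sum _ fun i _ => (hXint i).mul_const _
  have hZg : Integrable (fun ω => ∑ j, Z ω j * γ j) μ :=
    integrable_finset_sum _ fun j _ => (hZint j).mul_const _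
  have hXmeas : Measurable[mX] X := by
    rw [hmXdef]; exact Measurable.of_comap_le le_rfl
  have hXb_meas : StronglyMeasurable[mX] (fun ω => ∑ i, X ω i * β i) :=
    Finset.stronglyMeasurable_fun_sum _ fun i _ =>
      (((measurable_pi_apply i).comp hXmeas).stronglyMeasurable.mul_const _)
  -- conditional expectation of the Z-part
  have hZpart : μ[(fun ω => ∑ j, Z ω j * γ j) | mX] =ᵐ[μ]
      fun _ => ∑ j, (∫ ω', Z ω' j ∂μ) * γ j := by
    have h1 : μ[(fun ω => ∑ j, Z ω j * γ j) | mX] =ᵐ[μ]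
        fun ω => ∑ j, (μ[(fun ω' => Z ω' j) | mX]) ω * γ j := by
      have h2 : (fun ω => ∑ j, Z ω j * γ j)
          = ∑ j : Fin q, γ j • (fun ω => Z ω j) := by
        funext ω; simp [Finset.sum_apply, mul_comm]
      rw [h2]
      refine (condExp_finsetSum (fun j _ => ((hZint j).smul (γ j))) mX).trans ?_
      have h3 : ∀ᵐ ω ∂μ, ∀ j : Fin q,
          (μ[γ j • (fun ω' => Z ω' j) | mX]) ω
            = (γ j • μ[(fun ω' => Z ω' j) | mX]) ω :=
        ae_all_iff.mpr fun j => condExp_smul (γ j) (fun ω' => Z ω' j) mX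
      filter_upwards [h3] with ω hω
      simp only [Finset.sum_apply]
      refine Finset.sum_congr rfl fun j _ => ?_
      rw [hω j]
      simp [mul_comm]
    refine h1.trans ?_
    have h4 : ∀ᵐ ω ∂μ, ∀ j : Fin q,
        (μ[(fun ω' => Z ω' j) | mX]) ω = ∫ ω', Z ω' j ∂μ :=
      ae_all_iff.mpr fun j => horth j
    filter_upwards [h4] with ω hω
    exact Finset.sum_congr rfl fun j _ => by rw [hω j]
  -- E[Y | mX]
  have hEY1 : μ[Y | mX] =ᵐ[μ]
      fun ω => (∑ i, X ω i * β i) + ∑ j, (∫ ω', Z ω' j ∂μ) * γ j := by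
    calc μ[Y | mX] =ᵐ[μ] μ[μ[Y | mXZ] | mX] := (condExp_condExp_of_le hle hmXZ).symm
    _ =ᵐ[μ] μ[(fun ω => (∑ i, X ω i * β i) + ∑ j, Z ω j * γ j) | mX] :=
        condExp_congr_ae hmodel
    _ =ᵐ[μ] μ[(fun ω => ∑ i, X ω i * β i) | mX]
          + μ[(fun ω => ∑ j, Z ω j * γ j) | mX] := condExp_add hXb hZg mX
    _ =ᵐ[μ] fun ω => (∑ i, X ω i * β i) + ∑ j, (∫ ω', Z ω' j ∂μ) * γ j := by
        have h5 : μ[(fun ω => ∑ i, X ω i * β i) | mX]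
            = fun ω => ∑ i, X ω i * β i :=
          condExp_of_stronglyMeasurable hmX hXb_meas hXb
        filter_upwards [hZpart] with ω hω
        simp [h5, hω]
  -- the mean of Y
  have hEY : ∫ ω, Y ω ∂μ
      = (∑ i, (∫ ω', X ω' i ∂μ) * β i) + ∑ j, (∫ ω', Z ω' j ∂μ) * γ j := by
    rw [← integral_condExp hmXZ (f := Y), integral_congr_ae hmodel,
      integral_add hXb hZg, integral_finset_sum _ (fun i _ => (hXint i).mul_const _),
      integral_finset_sum _ (fun j _ => (hZint j).mul_const _)]
    simp [integral_mul_const]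
  -- assemble
  have hsub : μ[(fun ω => Y ω - ∫ ω', Y ω' ∂μ) | mX] =ᵐ[μ]
      μ[Y | mX] - μ[(fun _ => ∫ ω', Y ω' ∂μ) | mX] := condExp_sub hY (integrable_const _) mX
  refine hsub.trans ?_
  filter_upwards [hEY1] with ω hω
  simp only [Pi.sub_apply, hω, condExp_const hmX, hEY]
  simp only [sub_mul, Finset.sum_sub_distrib]
  ring
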